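/- arXiv:2406.06903 — 2 statements merged into one kernel-verified Lean document; each statement's English description precedes it below -/
import Mathlib

section
/- Let μ be a finite nonnegative measure on [0,∞) with total mass |μ| > 0 and μ((0,∞)) > 0, φ(z) = ∫₀^∞ e^{-tz} dμ(t), and Δ₁ > Δ₂ > 0. If β₁ ≥ 0 satisfies (1/|μ|)∫₀^∞ e^{-4β₁² t} dμ(t) < (Δ₁² − Δ₂²)/(Δ₁² + Δ₂²), then for every β₂ > 0: L_Δ(β₁, β₂) < L_Δ(β₁, 0), where L_Δ(β) = (φ(0) − φ(4β₁² + 4β₂²))(Δ₁² + Δ₂²) − (φ(4β₁²) − φ(4β₂²))(Δ₁² − Δ₂²). -/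
open MeasureTheory


/-- φ(z) = ∫₀^∞ e^{-tz} dμ(t). -/
noncomputable def phi (μ : Measure ℝ) (z : ℝ) : ℝ := ∫ t, Real.exp (-(t * z)) ∂μ

/-- L_Δ(β) = (φ(0) − φ(4β₁² + 4β₂²))(Δ₁² + Δ₂²) − (φ(4β₁²) − φ(4β₂²))(Δ₁² − Δ₂²). -/
noncomputable def L (φ : ℝ → ℝ) (Δ₁ Δ₂ β₁ β₂ : ℝ) : ℝ :=
  (φ 0 - φ (4 * β₁ ^ 2 + 4 * β₂ ^ 2)) * (Δ₁ ^ 2 + Δ₂ ^ 2)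
    - (φ (4 * β₁ ^ 2) - φ (4 * β₂ ^ 2)) * (Δ₁ ^ 2 - Δ₂ ^ 2)



/-- Chebyshev correlation inequality for two monotone functions. -/
lemma cheb (μ : Measure ℝ) [IsFiniteMeasure μ] {f g : ℝ → ℝ} (hf : Monotone f) (hg : Monotone g)
    (hfi : Integrable f μ) (hgi : Integrable g μ)
    (hfgi : Integrable (fun x => f x * g x) μ) :
    (∫ x, f x ∂μ) * (∫ x, g x ∂μ) ≤ (μ Set.univ).toReal * ∫ x, f x * g x ∂μ := by
  set M := (μ Set.univ).toReal with hM
  have key : ∀ x : ℝ, 0 ≤ M * (f x * g x) - f x * (∫ y, g y ∂μ) - g x * (∫ y, f y ∂μ)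
      + ∫ y, f y * g y ∂μ := by
    intro x
    have h0 : 0 ≤ ∫ y, (f x - f y) * (g x - g y) ∂μ := by
      refine integral_nonneg fun y => ?_
      show (0:ℝ) ≤ _
      rcases le_total x y with h | h
      · nlinarith [hf h, hg h]
      · nlinarith [hf h, hg h]
    have hA : Integrable (fun y => f x * g x - f x * g y - g x * f y) μ := by
      exact ((integrable_const _).sub (hgi.const_mul _)).sub (hfi.const_mul _)
    have hB : Integrable (fun y => f x * g x - f x * g y) μ := by
      exact (integrable_const _).sub (hgi.const_mul _)
    have i0 : ∫ y, (f x - f y) * (g x - g y) ∂μ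
        = ∫ y, f x * g x - f x * g y - g x * f y + f y * g y ∂μ := by
      refine integral_congr_ae (Filter.Eventually.of_forall fun y => ?_); ring
    have i1 : ∫ y, f x * g x - f x * g y - g x * f y + f y * g y ∂μ
        = (∫ y, f x * g x - f x * g y - g x * f y ∂μ) + ∫ y, f y * g y ∂μ :=
      integral_add hA hfgi
    have i2 : ∫ y, f x * g x - f x * g y - g x * f y ∂μ
        = (∫ y, f x * g x - f x * g y ∂μ) - ∫ y, g x * f y ∂μ :=
      integral_sub hB (hfi.const_mul _)
    have i3 : ∫ y, f x * g x - f x * g y ∂μ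
        = (∫ y, (f x * g x : ℝ) ∂μ) - ∫ y, f x * g y ∂μ :=
      integral_sub (integrable_const _) (hgi.const_mul _)
    have i4 : ∫ y, (f x * g x : ℝ) ∂μ = M * (f x * g x) := by
      rw [integral_const]; simp [hM, smul_eq_mul, measureReal_def]
    have i5 : ∫ y, f x * g y ∂μ = f x * ∫ y, g y ∂μ := integral_const_mul _ _
    have i6 : ∫ y, g x * f y ∂μ = g x * ∫ y, f y ∂μ := integral_const_mul _ _
    rw [i0, i1, i2, i3, i4, i5, i6] at h0
    linarith
  have hC : Integrable (fun x => M * (f x * g x) - f x * (∫ y, g y ∂μ)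
      - g x * (∫ y, f y ∂μ)) μ := by
    exact ((hfgi.const_mul _).sub (hfi.mul_const _)).sub (hgi.mul_const _)
  have hD : Integrable (fun x => M * (f x * g x) - f x * (∫ y, g y ∂μ)) μ := by
    exact (hfgi.const_mul _).sub (hfi.mul_const _)
  have h1 : 0 ≤ ∫ x, (M * (f x * g x) - f x * (∫ y, g y ∂μ) - g x * (∫ y, f y ∂μ)
      + ∫ y, f y * g y ∂μ) ∂μ := integral_nonneg fun x => key x
  have j1 : ∫ x, (M * (f x * g x) - f x * (∫ y, g y ∂μ) - g x * (∫ y, f y ∂μ)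
      + ∫ y, f y * g y ∂μ) ∂μ
      = (∫ x, (M * (f x * g x) - f x * (∫ y, g y ∂μ) - g x * (∫ y, f y ∂μ)) ∂μ)
        + ∫ x, (∫ y, f y * g y ∂μ : ℝ) ∂μ := integral_add hC (integrable_const _)
  have j2 : ∫ x, (M * (f x * g x) - f x * (∫ y, g y ∂μ) - g x * (∫ y, f y ∂μ)) ∂μ
      = (∫ x, (M * (f x * g x) - f x * (∫ y, g y ∂μ)) ∂μ)
        - ∫ x, g x * (∫ y, f y ∂μ) ∂μ := integral_sub hD (hgi.mul_const _)
  have j3 : ∫ x, (M * (f x * g x) - f x * (∫ y, g y ∂μ)) ∂μ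
      = (∫ x, M * (f x * g x) ∂μ) - ∫ x, f x * (∫ y, g y ∂μ) ∂μ :=
    integral_sub (hfgi.const_mul _) (hfi.mul_const _)
  have j4 : ∫ x, M * (f x * g x) ∂μ = M * ∫ x, f x * g x ∂μ := integral_const_mul _ _
  have j5 : ∫ x, f x * (∫ y, g y ∂μ) ∂μ = (∫ x, f x ∂μ) * ∫ y, g y ∂μ :=
    integral_mul_const _ _
  have j6 : ∫ x, g x * (∫ y, f y ∂μ) ∂μ = (∫ x, g x ∂μ) * ∫ y, f y ∂μ :=
    integral_mul_const _ _
  have j7 : ∫ x, (∫ y, f y * g y ∂μ : ℝ) ∂μ = M * ∫ y, f y * g y ∂μ := by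
    rw [integral_const]; simp [hM, smul_eq_mul, measureReal_def]
  rw [j1, j2, j3, j4, j5, j6, j7] at h1
  linarith

/-- if (1/|μ|)∫₀^∞ e^{-4β₁²t} dμ(t) < (Δ₁² − Δ₂²)/(Δ₁² + Δ₂²), then setting the
weight of the weaker feature to zero increases L_Δ: L_Δ(β₁,β₂) < L_Δ(β₁,0) for all β₂ > 0. -/
theorem stmt12 (μ : Measure ℝ) [IsFiniteMeasure μ] (hsupp : μ (Set.Iio 0) = 0)
    (hmass : 0 < (μ Set.univ).toReal) (hpos : 0 < μ (Set.Ioi 0))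
    (Δ₁ Δ₂ : ℝ) (h12 : Δ₂ < Δ₁) (h2 : 0 < Δ₂) (β₁ : ℝ) (hβ₁ : 0 ≤ β₁)
    (hcond : (1 / (μ Set.univ).toReal) * ∫ t, Real.exp (-(4 * β₁ ^ 2 * t)) ∂μ
      < (Δ₁ ^ 2 - Δ₂ ^ 2) / (Δ₁ ^ 2 + Δ₂ ^ 2)) :
    ∀ β₂ : ℝ, 0 < β₂ → L (phi μ) Δ₁ Δ₂ β₁ β₂ < L (phi μ) Δ₁ Δ₂ β₁ 0 := by
  intro β₂ hβ₂
  set M := (μ Set.univ).toReal with hMdef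
  set D := Δ₁ ^ 2 - Δ₂ ^ 2 with hDdef
  set S := Δ₁ ^ 2 + Δ₂ ^ 2 with hSdef
  have hD : 0 < D := by simp only [hDdef]; nlinarith
  have hS : 0 < S := by positivity
  set a := 4 * β₁ ^ 2 with hadef
  set b := 4 * β₂ ^ 2 with hbdef
  have ha : 0 ≤ a := by positivity
  have hb : 0 < b := by positivity
  -- a.e. nonnegativity of t
  have hae : ∀ᵐ t ∂μ, 0 ≤ t := by
    rw [ae_iff]
    convert hsupp using 2
    ext t; simp [not_le]
  -- integrability of exponentials
  have hint : ∀ c : ℝ, 0 ≤ c → Integrable (fun t => Real.exp (-(t * c))) μ := by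
    intro c hc
    refine (integrable_const (1 : ℝ)).mono' ?_ ?_
    · exact (Real.continuous_exp.comp (by continuity)).aestronglyMeasurable
    · filter_upwards [hae] with t ht
      rw [Real.norm_eq_abs, abs_of_pos (Real.exp_pos _)]
      calc Real.exp (-(t * c)) ≤ Real.exp 0 :=
            Real.exp_le_exp.2 (by nlinarith)
        _ = 1 := Real.exp_zero
  have hIa : Integrable (fun t => Real.exp (-(t * a))) μ := hint a ha
  have hIb : Integrable (fun t => Real.exp (-(t * b))) μ := hint b hb.le
  have hIab : Integrable (fun t => Real.exp (-(t * (a + b)))) μ :=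
    hint (a + b) (by positivity)
  -- the functions f and g
  set f : ℝ → ℝ := fun t => 1 - Real.exp (-(t * b)) with hfdef
  set g : ℝ → ℝ := fun t => D - S * Real.exp (-(t * a)) with hgdef
  have hf : Monotone f := by
    intro x y hxy
    simp only [hfdef]
    have := Real.exp_le_exp.2 (show -(y * b) ≤ -(x * b) by nlinarith)
    linarith
  have hg : Monotone g := by
    intro x y hxy
    simp only [hgdef]
    have h := Real.exp_le_exp.2 (show -(y * a) ≤ -(x * a) by nlinarith)
    have := mul_le_mul_of_nonneg_left h hS.le
    linarith
  have hfi : Integrable f μ := (integrable_const 1).sub hIb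
  have hgi : Integrable g μ := (integrable_const D).sub (hIa.const_mul S)
  have hprod_eq : ∀ t : ℝ, f t * g t
      = D - S * Real.exp (-(t * a)) - D * Real.exp (-(t * b))
        + S * Real.exp (-(t * (a + b))) := by
    intro t
    have he : Real.exp (-(t * a)) * Real.exp (-(t * b)) = Real.exp (-(t * (a + b))) := by
      rw [← Real.exp_add]; ring_nf
    simp only [hfdef, hgdef]
    rw [← he]; ring
  have hfgi : Integrable (fun t => f t * g t) μ := by
    have : (fun t => f t * g t) = fun t =>
        D - S * Real.exp (-(t * a)) - D * Real.exp (-(t * b))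
          + S * Real.exp (-(t * (a + b))) := funext hprod_eq
    rw [this]
    exact (((integrable_const D).sub (hIa.const_mul S)).sub (hIb.const_mul D)).add
      (hIab.const_mul S)
  -- compute the three integrals
  have hIf : ∫ t, f t ∂μ = M - phi μ b := by
    simp only [hfdef]
    rw [integral_sub (integrable_const 1) hIb, integral_const]
    simp [phi, hMdef, smul_eq_mul, measureReal_def]
  have hIg : ∫ t, g t ∂μ = D * M - S * phi μ a := by
    simp only [hgdef]
    rw [integral_sub (integrable_const D) (hIa.const_mul S), integral_const,
      integral_const_mul]
    simp [phi, hMdef, smul_eq_mul, mul_comm, measureReal_def]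
  have hIfg : ∫ t, f t * g t ∂μ
      = D * M - S * phi μ a - D * phi μ b + S * phi μ (a + b) := by
    have hA : Integrable (fun t => D - S * Real.exp (-(t * a)) - D * Real.exp (-(t * b))) μ := by
      exact ((integrable_const D).sub (hIa.const_mul S)).sub (hIb.const_mul D)
    have hB : Integrable (fun t => D - S * Real.exp (-(t * a))) μ := by
      exact (integrable_const D).sub (hIa.const_mul S)
    have k0 : ∫ t, f t * g t ∂μ = ∫ t, (D - S * Real.exp (-(t * a)) - D * Real.exp (-(t * b))
        + S * Real.exp (-(t * (a + b)))) ∂μ :=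
      integral_congr_ae (Filter.Eventually.of_forall hprod_eq)
    have k1 : ∫ t, (D - S * Real.exp (-(t * a)) - D * Real.exp (-(t * b))
        + S * Real.exp (-(t * (a + b)))) ∂μ
        = (∫ t, (D - S * Real.exp (-(t * a)) - D * Real.exp (-(t * b))) ∂μ)
          + ∫ t, S * Real.exp (-(t * (a + b))) ∂μ := integral_add hA (hIab.const_mul S)
    have k2 : ∫ t, (D - S * Real.exp (-(t * a)) - D * Real.exp (-(t * b))) ∂μ
        = (∫ t, (D - S * Real.exp (-(t * a))) ∂μ) - ∫ t, D * Real.exp (-(t * b)) ∂μ :=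
      integral_sub hB (hIb.const_mul D)
    have k3 : ∫ t, (D - S * Real.exp (-(t * a))) ∂μ
        = (∫ t, (D : ℝ) ∂μ) - ∫ t, S * Real.exp (-(t * a)) ∂μ :=
      integral_sub (integrable_const D) (hIa.const_mul S)
    rw [k0, k1, k2, k3, integral_const, integral_const_mul, integral_const_mul,
      integral_const_mul]
    simp only [phi, hMdef, smul_eq_mul, measureReal_def]
    ring
  -- positivity of ∫ f
  have hIfpos : 0 < ∫ t, f t ∂μ := by
    rw [integral_pos_iff_support_of_nonneg_ae]
    · refine lt_of_lt_of_le hpos (measure_mono fun t ht => ?_)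
      have ht' : (0 : ℝ) < t := ht
      simp only [Function.mem_support, hfdef]
      have : Real.exp (-(t * b)) < 1 := by
        rw [← Real.exp_zero]
        exact Real.exp_lt_exp.2 (by nlinarith)
      intro h; linarith [sub_eq_zero.1 h]
    · filter_upwards [hae] with t ht
      simp only [hfdef, Pi.zero_apply]
      have : Real.exp (-(t * b)) ≤ 1 := by
        rw [← Real.exp_zero]
        exact Real.exp_le_exp.2 (by nlinarith)
      linarith
    · exact hfi
  -- positivity of ∫ g, from hcond
  have hphia : (∫ t, Real.exp (-(4 * β₁ ^ 2 * t)) ∂μ) = phi μ a := by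
    simp only [phi, hadef]
    congr 1; funext t; ring_nf
  have hIgpos : 0 < ∫ t, g t ∂μ := by
    rw [hIg]
    rw [hphia] at hcond
    have h1 : phi μ a / M < D / S := by
      rw [div_eq_mul_inv, mul_comm]
      simpa [one_div] using hcond
    have h2 : phi μ a * S < D * M := by
      rw [div_lt_div_iff₀ hmass hS] at h1
      linarith
    linarith
  -- Chebyshev
  have hch := cheb μ hf hg hfi hgi hfgi
  have hIfgpos : 0 < ∫ t, f t * g t ∂μ := by
    have hp : 0 < M * ∫ t, f t * g t ∂μ := lt_of_lt_of_le (mul_pos hIfpos hIgpos) hch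
    by_contra hc
    push_neg at hc
    exact absurd hp (not_lt.2 (mul_nonpos_of_nonneg_of_nonpos hmass.le hc))
  -- conclude
  have hphi0 : phi μ 0 = M := by simp [phi, hMdef, measureReal_def]
  have hkey : 0 < D * M - S * phi μ a - D * phi μ b + S * phi μ (a + b) := by
    rw [← hIfg]; exact hIfgpos
  simp only [L]
  have e1 : 4 * β₁ ^ 2 + 4 * (0:ℝ) ^ 2 = a := by simp [hadef]
  have e2 : 4 * (0:ℝ) ^ 2 = 0 := by norm_num
  have e3 : (4 * β₁ ^ 2 : ℝ) = a := hadef.symm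
  have e4 : 4 * β₁ ^ 2 + 4 * β₂ ^ 2 = a + b := by rw [hadef, hbdef]
  have e5 : (4 * β₂ ^ 2 : ℝ) = b := hbdef.symm
  rw [e1, e2, e3, e4, e5, hphi0, ← hSdef, ← hDdef]
  linarith [hkey]
end

section
/- Let φ(z) = ∫₀^∞ e^{-tz} dμ(t), μ finite nonnegative with μ((0,∞)) > 0, fix q ∈ [1,∞], r > 0, set b₀ = r/2^{1/q} (with b₀ = r when q = ∞), and suppose Δ₁ > Δ₂ > 0 satisfy (1/|μ|)∫₀^∞ e^{-4b₀²t} dμ(t) < (Δ₁² − Δ₂²)/(Δ₁² + Δ₂²). Then every maximizer β* of L_Δ over the ℓ_q-ball {β ∈ ℝ² : ‖β‖_q ≤ r} satisfies β*₂ = 0 and |β*₁| = r, i.e., supp(β*) = {1}. -/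
open MeasureTheory

/-- The ℓ_q norm of (β₁, β₂) ∈ ℝ², q ∈ [1, ∞], via `PiLp`. -/
noncomputable def lqNorm (q : ENNReal) (β₁ β₂ : ℝ) : ℝ :=
  ‖(WithLp.equiv q (Fin 2 → ℝ)).symm ![β₁, β₂]‖

/- ## Auxiliary lemmas on `lqNorm` -/

lemma sup_fin2 (f : Fin 2 → ℝ) : (⨆ i, f i) = max (f 0) (f 1) := by
  apply le_antisymm
  · apply ciSup_le; intro i
    fin_cases i
    · exact le_max_left _ _
    · exact le_max_right _ _
  · apply max_le <;> exact le_ciSup (Set.Finite.bddAbove (Set.finite_range f)) _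

lemma lq_top (x y : ℝ) : lqNorm ⊤ x y = max |x| |y| := by
  rw [lqNorm, PiLp.norm_eq_ciSup, sup_fin2]
  simp [Real.norm_eq_abs]

lemma lq_fin (q : ENNReal) (hq : 0 < q.toReal) (x y : ℝ) :
    lqNorm q x y = (|x| ^ q.toReal + |y| ^ q.toReal) ^ (1 / q.toReal) := by
  rw [lqNorm, PiLp.norm_eq_sum hq]
  simp [Fin.sum_univ_two, Real.norm_eq_abs]

lemma toReal_pos_of (q : ENNReal) (hq : 1 ≤ q) (hq' : q ≠ ⊤) : 0 < q.toReal :=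
  ENNReal.toReal_pos (ne_of_gt (lt_of_lt_of_le zero_lt_one hq)) hq'

lemma lq_zero (q : ENNReal) (hq : 1 ≤ q) (x : ℝ) : lqNorm q x 0 = |x| := by
  rcases eq_or_ne q ⊤ with h | h
  · subst h; rw [lq_top]; simp
  · have hp := toReal_pos_of q hq h
    rw [lq_fin q hp]
    rw [abs_zero, Real.zero_rpow (ne_of_gt hp), add_zero,
      ← Real.rpow_mul (abs_nonneg x), mul_one_div_cancel (ne_of_gt hp), Real.rpow_one]

lemma lq_comm (q : ENNReal) (hq : 1 ≤ q) (x y : ℝ) : lqNorm q x y = lqNorm q y x := by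
  rcases eq_or_ne q ⊤ with h | h
  · subst h; rw [lq_top, lq_top, max_comm]
  · rw [lq_fin q (toReal_pos_of q hq h), lq_fin q (toReal_pos_of q hq h), add_comm]

lemma lq_coord1 (q : ENNReal) (hq : 1 ≤ q) (x y : ℝ) : |x| ≤ lqNorm q x y := by
  rcases eq_or_ne q ⊤ with h | h
  · subst h; rw [lq_top]; exact le_max_left _ _
  · have hp := toReal_pos_of q hq h
    rw [lq_fin q hp]
    calc |x| = (|x| ^ q.toReal) ^ (1 / q.toReal) := by
          rw [← Real.rpow_mul (abs_nonneg x), mul_one_div_cancel (ne_of_gt hp), Real.rpow_one]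
      _ ≤ _ := by
          apply Real.rpow_le_rpow (by positivity) _ (by positivity)
          have : (0:ℝ) ≤ |y| ^ q.toReal := by positivity
          linarith

lemma lq_strict (q : ENNReal) (hq : 1 ≤ q) (b₀ x y : ℝ) (hb : 0 ≤ b₀)
    (h1 : b₀ < |x|) (h2 : b₀ < |y|) : lqNorm q b₀ b₀ < lqNorm q x y := by
  rcases eq_or_ne q ⊤ with h | h
  · subst h; rw [lq_top, lq_top, abs_of_nonneg hb, max_self]
    exact lt_max_of_lt_left h1
  · have hp := toReal_pos_of q hq h
    rw [lq_fin q hp, lq_fin q hp, abs_of_nonneg hb]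
    apply Real.rpow_lt_rpow (by positivity) _ (by positivity)
    have a1 : b₀ ^ q.toReal < |x| ^ q.toReal := Real.rpow_lt_rpow hb h1 hp
    have a2 : b₀ ^ q.toReal < |y| ^ q.toReal := Real.rpow_lt_rpow hb h2 hp
    linarith

/- ## Auxiliary lemmas on `phi` -/

lemma ae_nonneg (μ : Measure ℝ) (hsupp : μ (Set.Iio 0) = 0) : ∀ᵐ t ∂μ, 0 ≤ t := by
  rw [ae_iff]
  convert hsupp using 2
  ext t; simp [not_le]

lemma int_exp (μ : Measure ℝ) [IsFiniteMeasure μ] (hsupp : μ (Set.Iio 0) = 0)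
    {z : ℝ} (hz : 0 ≤ z) : Integrable (fun t => Real.exp (-(t * z))) μ := by
  apply Integrable.mono' (integrable_const (1:ℝ))
  · exact (Real.continuous_exp.comp (by continuity)).aestronglyMeasurable
  · filter_upwards [ae_nonneg μ hsupp] with t ht
    rw [Real.norm_eq_abs, abs_of_pos (Real.exp_pos _)]
    exact Real.exp_le_one_iff.mpr (by nlinarith)

lemma phi_zero (μ : Measure ℝ) [IsFiniteMeasure μ] : phi μ 0 = (μ Set.univ).toReal := by
  simp [phi]
  rfl

lemma phi_mono (μ : Measure ℝ) [IsFiniteMeasure μ] (hsupp : μ (Set.Iio 0) = 0)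
    {z₁ z₂ : ℝ} (h1 : 0 ≤ z₁) (h : z₁ ≤ z₂) : phi μ z₂ ≤ phi μ z₁ := by
  apply integral_mono_ae (int_exp μ hsupp (le_trans h1 h)) (int_exp μ hsupp h1)
  filter_upwards [ae_nonneg μ hsupp] with t ht
  exact Real.exp_le_exp.mpr (by nlinarith)

lemma phi_strict (μ : Measure ℝ) [IsFiniteMeasure μ] (hsupp : μ (Set.Iio 0) = 0)
    (hpos : 0 < μ (Set.Ioi 0)) {z₁ z₂ : ℝ} (h1 : 0 ≤ z₁) (h : z₁ < z₂) :
    phi μ z₂ < phi μ z₁ := by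
  have hint1 := int_exp μ hsupp h1
  have hint2 := int_exp μ hsupp (le_trans h1 h.le)
  have key : 0 < ∫ t, (Real.exp (-(t * z₁)) - Real.exp (-(t * z₂))) ∂μ := by
    rw [integral_pos_iff_support_of_nonneg_ae]
    · apply lt_of_lt_of_le hpos
      apply measure_mono
      intro t ht
      simp only [Function.mem_support]
      have htpos : 0 < t := ht
      have : Real.exp (-(t * z₂)) < Real.exp (-(t * z₁)) := by
        apply Real.exp_lt_exp.mpr
        nlinarith
      intro hc; rw [sub_eq_zero] at hc; linarith [hc ▸ this]
    · filter_upwards [ae_nonneg μ hsupp] with t ht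
      simp only [Pi.zero_apply, sub_nonneg]
      exact Real.exp_le_exp.mpr (by nlinarith)
    · exact hint1.sub hint2
  have := integral_sub hint1 hint2
  unfold phi
  rw [this] at key
  linarith

/- ## The key pointwise inequality -/

set_option maxHeartbeats 1000000 in
lemma pointwise_key (A B a b b4 r4 t : ℝ) (hB : 0 < B) (hBA : B < A)
    (ht : 0 ≤ t) (ha : 0 ≤ a) (har : a ≤ r4) (hb : 0 < b) (hbb : b ≤ b4)
    (hb4 : 0 < b4) (hb4r : b4 ≤ r4) :
    (1 - Real.exp (-(Real.log (A/B) / b4 * b))) * (B - A * Real.exp (-(t * b4)))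
      ≤ A * Real.exp (-(t * (a + b))) + B * Real.exp (-(t * a)) - B * Real.exp (-(t * b)) + B
        - (A + B) * Real.exp (-(t * r4)) := by
  have hA : 0 < A := lt_trans hB hBA
  set t₀ : ℝ := Real.log (A/B) / b4 with ht₀def
  have hAB1 : 1 < A / B := (one_lt_div hB).mpr hBA
  have hlog : 0 < Real.log (A/B) := Real.log_pos hAB1
  have ht₀ : 0 < t₀ := div_pos hlog hb4
  have hsplit : -(t * (a + b)) = -(t * a) + -(t * b) := by ring
  rw [hsplit, Real.exp_add]
  set x := Real.exp (-(t * a)) with hx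
  set y := Real.exp (-(t * b)) with hy
  set z := Real.exp (-(t * r4)) with hz
  set y₀ := Real.exp (-(t * b4)) with hy0
  set e := Real.exp (-(t₀ * b)) with he
  have hy0e : Real.exp (-(t₀ * b4)) = B / A := by
    rw [ht₀def, div_mul_cancel₀ _ (ne_of_gt hb4), Real.exp_neg, Real.exp_log (by positivity),
      inv_div]
  have hzx : z ≤ x := Real.exp_le_exp.mpr (by nlinarith)
  have hzy0 : z ≤ y₀ := Real.exp_le_exp.mpr (by nlinarith)
  have hy0y : y₀ ≤ y := Real.exp_le_exp.mpr (by nlinarith)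
  have hy1 : y ≤ 1 := Real.exp_le_one_iff.mpr (by nlinarith)
  have hxpos : 0 < x := Real.exp_pos _
  have hypos : 0 < y := Real.exp_pos _
  have hzpos : 0 < z := Real.exp_pos _
  have ht1 : 0 ≤ (x - z) * (A * y + B) := by
    apply mul_nonneg (by linarith) (by positivity)
  have ht2 : 0 ≤ A * (1 - y) * (y₀ - z) := by
    apply mul_nonneg (by nlinarith) (by linarith)
  have ht3 : 0 ≤ (1 - y - (1 - e)) * (B - A * y₀) := by
    rcases le_or_gt (A * y₀) B with hcase | hcase
    · have h1 : y₀ ≤ Real.exp (-(t₀ * b4)) := by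
        rw [hy0e]; rw [le_div_iff₀ hA]; linarith [mul_comm y₀ A]
      have h2 : -(t * b4) ≤ -(t₀ * b4) := Real.exp_le_exp.mp h1
      have h2' : t₀ * b4 ≤ t * b4 := by linarith
      have h3 : t₀ ≤ t := le_of_mul_le_mul_right h2' hb4
      have h4 : y ≤ e := Real.exp_le_exp.mpr (by nlinarith)
      apply mul_nonneg (by linarith) (by linarith)
    · have h1 : Real.exp (-(t₀ * b4)) ≤ y₀ := by
        rw [hy0e]; rw [div_le_iff₀ hA]; linarith [mul_comm y₀ A]
      have h2 : -(t₀ * b4) ≤ -(t * b4) := Real.exp_le_exp.mp h1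
      have h2' : t * b4 ≤ t₀ * b4 := by linarith
      have h3 : t ≤ t₀ := le_of_mul_le_mul_right h2' hb4
      have h4 : e ≤ y := Real.exp_le_exp.mpr (by nlinarith)
      have hu : 1 - y - (1 - e) ≤ 0 := by linarith
      have hv : B - A * y₀ ≤ 0 := by linarith
      nlinarith [mul_nonneg (neg_nonneg.mpr hu) (neg_nonneg.mpr hv)]
  have hid : A * (x * y) + B * x - B * y + B - (A + B) * z - (1 - e) * (B - A * y₀)
      = (x - z) * (A * y + B) + A * (1 - y) * (y₀ - z) + (1 - y - (1 - e)) * (B - A * y₀) := by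
    ring
  linarith [hid]

/- ## The key integral inequality -/

lemma key_integral (μ : Measure ℝ) [IsFiniteMeasure μ] (hsupp : μ (Set.Iio 0) = 0)
    (A B a b b4 r4 : ℝ) (hB : 0 < B) (hBA : B < A)
    (ha : 0 ≤ a) (har : a ≤ r4) (hb : 0 < b) (hbb : b ≤ b4)
    (hb4 : 0 < b4) (hb4r : b4 ≤ r4) :
    (1 - Real.exp (-(Real.log (A/B) / b4 * b))) * (B * phi μ 0 - A * phi μ b4)
      ≤ A * phi μ (a + b) + B * phi μ a - B * phi μ b + B * phi μ 0 - (A + B) * phi μ r4 := by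
  have i0 := int_exp μ hsupp (le_refl (0:ℝ))
  have iab := int_exp μ hsupp (by linarith : (0:ℝ) ≤ a + b)
  have ia := int_exp μ hsupp ha
  have ib := int_exp μ hsupp hb.le
  have ib4 := int_exp μ hsupp hb4.le
  have ir4 := int_exp μ hsupp (by linarith : (0:ℝ) ≤ r4)
  set c : ℝ := 1 - Real.exp (-(Real.log (A/B) / b4 * b)) with hc
  have hI1 : Integrable (fun t => A * Real.exp (-(t*(a+b))) + B * Real.exp (-(t*a))) μ :=
    (iab.const_mul A).add (ia.const_mul B)
  have hI2 : Integrable (fun t => A * Real.exp (-(t*(a+b))) + B * Real.exp (-(t*a))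
      - B * Real.exp (-(t*b))) μ := hI1.sub (ib.const_mul B)
  have hI3 : Integrable (fun t => A * Real.exp (-(t*(a+b))) + B * Real.exp (-(t*a))
      - B * Real.exp (-(t*b)) + B * Real.exp (-(t*(0:ℝ)))) μ := hI2.add (i0.const_mul B)
  have hIf : Integrable (fun t => c * (B * Real.exp (-(t*(0:ℝ))) - A * Real.exp (-(t*b4)))) μ :=
    ((i0.const_mul B).sub (ib4.const_mul A)).const_mul c
  have hIg : Integrable (fun t => A * Real.exp (-(t*(a+b))) + B * Real.exp (-(t*a))
      - B * Real.exp (-(t*b)) + B * Real.exp (-(t*(0:ℝ)))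
      - (A + B) * Real.exp (-(t*r4))) μ := hI3.sub (ir4.const_mul (A+B))
  have hle := integral_mono_ae hIf hIg (by
    filter_upwards [ae_nonneg μ hsupp] with t ht
    have := pointwise_key A B a b b4 r4 t hB hBA ht ha har hb hbb hb4 hb4r
    simp only [mul_zero, neg_zero, Real.exp_zero, mul_one]
    rw [hc]
    linarith)
  rw [integral_const_mul _ _, integral_sub (i0.const_mul B) (ib4.const_mul A),
    integral_const_mul _ _, integral_const_mul _ _,
    integral_sub hI3 (ir4.const_mul (A+B)), integral_add hI2 (i0.const_mul B),
    integral_sub hI1 (ib.const_mul B), integral_add (iab.const_mul A) (ia.const_mul B),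
    integral_const_mul _ _, integral_const_mul _ _, integral_const_mul _ _, integral_const_mul _ _,
    integral_const_mul _ _] at hle
  simp only [phi]
  convert hle using 2

set_option maxHeartbeats 1000000 in
/-- let b₀ be the positive number with ‖(b₀,b₀)‖_q = r (i.e. b₀ = r/2^{1/q},
with b₀ = r if q = ∞), and suppose Δ₁ > Δ₂ > 0 satisfy
(1/|μ|)∫₀^∞ e^{-4b₀²t} dμ(t) < (Δ₁²−Δ₂²)/(Δ₁²+Δ₂²).  Then every maximizer β* of L_Δ over
the ℓ_q-ball of radius r satisfies β*₂ = 0 and |β*₁| = r, i.e. supp(β*) = {1}. -/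
theorem stmt18 (μ : Measure ℝ) [IsFiniteMeasure μ] (hsupp : μ (Set.Iio 0) = 0)
    (hpos : 0 < μ (Set.Ioi 0)) (q : ENNReal) (hq : 1 ≤ q) (r : ℝ) (hr : 0 < r)
    (b₀ : ℝ) (hb₀ : 0 < b₀) (hb₀norm : lqNorm q b₀ b₀ = r)
    (Δ₁ Δ₂ : ℝ) (h12 : Δ₂ < Δ₁) (h2 : 0 < Δ₂)
    (hcond : (1 / (μ Set.univ).toReal) * ∫ t, Real.exp (-(4 * b₀ ^ 2 * t)) ∂μ
      < (Δ₁ ^ 2 - Δ₂ ^ 2) / (Δ₁ ^ 2 + Δ₂ ^ 2))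
    (β : Fin 2 → ℝ) (hβ : lqNorm q (β 0) (β 1) ≤ r)
    (hmax : ∀ γ : Fin 2 → ℝ, lqNorm q (γ 0) (γ 1) ≤ r →
      L (phi μ) Δ₁ Δ₂ (γ 0) (γ 1) ≤ L (phi μ) Δ₁ Δ₂ (β 0) (β 1)) :
    β 1 = 0 ∧ |β 0| = r := by
  have hB : 0 < Δ₁ ^ 2 - Δ₂ ^ 2 := by nlinarith
  have hBA : Δ₁ ^ 2 - Δ₂ ^ 2 < Δ₁ ^ 2 + Δ₂ ^ 2 := by nlinarith
  have hA : (0:ℝ) < Δ₁ ^ 2 + Δ₂ ^ 2 := by nlinarith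
  -- φ(0) > 0
  have hμuniv : 0 < μ Set.univ := lt_of_lt_of_le hpos (measure_mono (Set.subset_univ _))
  have hφ0pos : 0 < phi μ 0 := by
    rw [phi_zero]
    exact ENNReal.toReal_pos (ne_of_gt hμuniv) (measure_ne_top μ _)
  -- rewrite the condition
  have hint_eq : ∫ t, Real.exp (-(4 * b₀ ^ 2 * t)) ∂μ = phi μ (4 * b₀ ^ 2) := by
    unfold phi; congr 1; funext t; congr 1; ring
  have hcond' : (Δ₁ ^ 2 + Δ₂ ^ 2) * phi μ (4 * b₀ ^ 2)
      < (Δ₁ ^ 2 - Δ₂ ^ 2) * phi μ 0 := by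
    rw [hint_eq, ← phi_zero] at hcond
    have h1 : (1 / phi μ 0) * phi μ (4 * b₀ ^ 2) = phi μ (4 * b₀ ^ 2) / phi μ 0 := by ring
    rw [h1, div_lt_div_iff₀ hφ0pos hA] at hcond
    linarith
  -- coordinate bounds
  have hβ0r : |β 0| ≤ r := le_trans (lq_coord1 q hq _ _) hβ
  have hb₀r : b₀ ≤ r := by
    have := le_trans (lq_coord1 q hq b₀ b₀) (le_of_eq hb₀norm)
    rwa [abs_of_pos hb₀] at this
  -- from maximality with the swapped point : (β 1)² ≤ (β 0)²
  have hswap := hmax ![β 1, β 0] (by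
    simp only [Matrix.cons_val_zero, Matrix.cons_val_one, Matrix.head_cons]
    rw [lq_comm q hq]; exact hβ)
  simp only [Matrix.cons_val_zero, Matrix.cons_val_one, Matrix.head_cons] at hswap
  have hcomm : 4 * (β 1) ^ 2 + 4 * (β 0) ^ 2 = 4 * (β 0) ^ 2 + 4 * (β 1) ^ 2 := by ring
  simp only [L, hcomm] at hswap
  have hPQ : phi μ (4 * (β 0) ^ 2) ≤ phi μ (4 * (β 1) ^ 2) := by nlinarith [hswap, hB]
  have hsq : (β 1) ^ 2 ≤ (β 0) ^ 2 := by
    by_contra hcon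
    push_neg at hcon
    have : phi μ (4 * (β 1) ^ 2) < phi μ (4 * (β 0) ^ 2) :=
      phi_strict μ hsupp hpos (by positivity) (by nlinarith)
    linarith
  -- the comparison point (r, 0)
  have hr0 := hmax ![r, 0] (by
    simp only [Matrix.cons_val_zero, Matrix.cons_val_one, Matrix.head_cons]
    rw [lq_zero q hq, abs_of_pos hr])
  simp only [Matrix.cons_val_zero, Matrix.cons_val_one, Matrix.head_cons, L] at hr0
  have e1 : 4 * r ^ 2 + 4 * (0:ℝ) ^ 2 = 4 * r ^ 2 := by norm_num
  have e2 : 4 * (0:ℝ) ^ 2 = 0 := by norm_num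
  rw [e1, e2] at hr0
  -- main claim : β 1 = 0
  have hβ1 : β 1 = 0 := by
    by_contra h1ne
    have hb1pos : 0 < (β 1) ^ 2 := by
      have := abs_pos.mpr h1ne
      nlinarith [sq_abs (β 1)]
    -- |β 1| ≤ b₀
    have habs : |β 1| ≤ |β 0| := by
      nlinarith [abs_nonneg (β 0), abs_nonneg (β 1), sq_abs (β 0), sq_abs (β 1)]
    have hβ1b₀ : |β 1| ≤ b₀ := by
      by_contra hcon
      push_neg at hcon
      have := lq_strict q hq b₀ (β 0) (β 1) hb₀.le (lt_of_lt_of_le hcon habs) hcon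
      rw [hb₀norm] at this
      linarith
    -- apply the key integral inequality
    have hbb4 : 4 * (β 1) ^ 2 ≤ 4 * b₀ ^ 2 := by
      nlinarith [sq_abs (β 1), abs_nonneg (β 1)]
    have har4 : 4 * (β 0) ^ 2 ≤ 4 * r ^ 2 := by
      nlinarith [sq_abs (β 0), abs_nonneg (β 0)]
    have hb4r4 : 4 * b₀ ^ 2 ≤ 4 * r ^ 2 := by nlinarith
    have hkey := key_integral μ hsupp (Δ₁ ^ 2 + Δ₂ ^ 2) (Δ₁ ^ 2 - Δ₂ ^ 2)
      (4 * (β 0) ^ 2) (4 * (β 1) ^ 2) (4 * b₀ ^ 2) (4 * r ^ 2) hB hBA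
      (by positivity) har4 (by positivity) hbb4 (by positivity) hb4r4
    -- the constant c is positive
    have hc : 0 < 1 - Real.exp (-(Real.log ((Δ₁ ^ 2 + Δ₂ ^ 2) / (Δ₁ ^ 2 - Δ₂ ^ 2))
        / (4 * b₀ ^ 2) * (4 * (β 1) ^ 2))) := by
      have hlog : 0 < Real.log ((Δ₁ ^ 2 + Δ₂ ^ 2) / (Δ₁ ^ 2 - Δ₂ ^ 2)) :=
        Real.log_pos ((one_lt_div hB).mpr hBA)
      have hexp : Real.exp (-(Real.log ((Δ₁ ^ 2 + Δ₂ ^ 2) / (Δ₁ ^ 2 - Δ₂ ^ 2))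
          / (4 * b₀ ^ 2) * (4 * (β 1) ^ 2))) < 1 := by
        rw [Real.exp_lt_one_iff]
        have : 0 < Real.log ((Δ₁ ^ 2 + Δ₂ ^ 2) / (Δ₁ ^ 2 - Δ₂ ^ 2))
            / (4 * b₀ ^ 2) * (4 * (β 1) ^ 2) := by positivity
        linarith
      linarith
    have hrhs : 0 < (Δ₁ ^ 2 - Δ₂ ^ 2) * phi μ 0
        - (Δ₁ ^ 2 + Δ₂ ^ 2) * phi μ (4 * b₀ ^ 2) := by linarith
    have hDpos : 0 < (Δ₁ ^ 2 + Δ₂ ^ 2) * phi μ (4 * (β 0) ^ 2 + 4 * (β 1) ^ 2)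
        + (Δ₁ ^ 2 - Δ₂ ^ 2) * phi μ (4 * (β 0) ^ 2)
        - (Δ₁ ^ 2 - Δ₂ ^ 2) * phi μ (4 * (β 1) ^ 2)
        + (Δ₁ ^ 2 - Δ₂ ^ 2) * phi μ 0
        - ((Δ₁ ^ 2 + Δ₂ ^ 2) + (Δ₁ ^ 2 - Δ₂ ^ 2)) * phi μ (4 * r ^ 2) := by
      have := mul_pos hc hrhs
      nlinarith [hkey, this]
    -- contradiction with maximality at (r, 0)
    nlinarith [hr0, hDpos]
  refine ⟨hβ1, ?_⟩
  -- now show |β 0| = r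
  rw [hβ1] at hr0
  rw [e2] at hr0
  have e3 : 4 * (β 0) ^ 2 + 0 = 4 * (β 0) ^ 2 := by ring
  rw [e3] at hr0
  have hφr : phi μ (4 * (β 0) ^ 2) ≤ phi μ (4 * r ^ 2) := by nlinarith [hr0]
  have hge : r ^ 2 ≤ (β 0) ^ 2 := by
    by_contra hcon
    push_neg at hcon
    have : phi μ (4 * r ^ 2) < phi μ (4 * (β 0) ^ 2) :=
      phi_strict μ hsupp hpos (by positivity) (by nlinarith)
    linarith
  have h1 : r ≤ |β 0| := by
    nlinarith [abs_nonneg (β 0), sq_abs (β 0)]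
  linarith [le_antisymm hβ0r h1]
end
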